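/- Let Sym₃ denote the subspace of Matrix (Fin 3) (Fin 3) ℝ consisting of symmetric matrices (Mᵀ = M), and let C : Sym₃ →ₗ[ℝ] Sym₃ be a linear map that is SO(3)-equivariant, i.e. C (Q * E * Qᵀ) = Q * (C E) * Qᵀ for every Q ∈ SO(3) and every symmetric matrix E. Then there exist real numbers a, b such that for every symmetric matrix E, C E = a • E + b • (Matrix.trace E) • (1 : Matrix (Fin 3) (Fin 3) ℝ). (Equivalently, C = 2G P^{ℍ²} + 3K P^{ℍ⁰}: C acts as the scalar a on traceless symmetric matrices and as the scalar a + 3b on multiples of the identity.) -/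

import Mathlib

open Matrix

/-- The space of symmetric 3×3 real matrices. -/
def Sym3 : Submodule ℝ (Matrix (Fin 3) (Fin 3) ℝ) where
  carrier := {M | Mᵀ = M}
  add_mem' := by
    intro a b ha hb
    simp only [Set.mem_setOf_eq] at *
    rw [Matrix.transpose_add, ha, hb]
  zero_mem' := Matrix.transpose_zero
  smul_mem' := by
    intro c a ha
    simp only [Set.mem_setOf_eq] at *
    rw [Matrix.transpose_smul, ha]

namespace IsoAux

abbrev Mat := Matrix (Fin 3) (Fin 3) ℝ

lemma conj_mem (Q : Mat) (E : Sym3) : Q * (E : Mat) * Qᵀ ∈ Sym3 := by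
  have hE : ((E : Mat))ᵀ = (E : Mat) := E.2
  show (Q * (E : Mat) * Qᵀ)ᵀ = _
  rw [Matrix.transpose_mul, Matrix.transpose_mul, Matrix.transpose_transpose, hE,
    Matrix.mul_assoc]


noncomputable def sq2 : ℝ := Real.sqrt 2 / 2

lemma sq2_sq : sq2 * sq2 = 1/2 := by
  have h2 : Real.sqrt 2 * Real.sqrt 2 = 2 := Real.mul_self_sqrt (by norm_num)
  rw [sq2, div_mul_div_comm, h2]; norm_num

noncomputable def Q12 : Mat := !![sq2,-sq2,0;sq2,sq2,0;0,0,1]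
noncomputable def Q13 : Mat := !![sq2,0,-sq2;0,1,0;sq2,0,sq2]
noncomputable def Q23 : Mat := !![1,0,0;0,sq2,-sq2;0,sq2,sq2]

lemma Q12T : Q12ᵀ = !![sq2,sq2,0;-sq2,sq2,0;0,0,1] := by
  ext i j; fin_cases i <;> fin_cases j <;> rfl

lemma Q13T : Q13ᵀ = !![sq2,0,sq2;0,1,0;-sq2,0,sq2] := by
  ext i j; fin_cases i <;> fin_cases j <;> rfl

lemma Q23T : Q23ᵀ = !![1,0,0;0,sq2,sq2;0,-sq2,sq2] := by
  ext i j; fin_cases i <;> fin_cases j <;> rfl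

lemma Q12o : Q12ᵀ * Q12 = 1 := by
  rw [Q12T, Q12, Matrix.mul_fin_three, Matrix.one_fin_three]
  ext i j
  fin_cases i <;> fin_cases j <;> simp [Matrix.vecHead, Matrix.vecTail]
  all_goals linear_combination 2 * sq2_sq

lemma Q13o : Q13ᵀ * Q13 = 1 := by
  rw [Q13T, Q13, Matrix.mul_fin_three, Matrix.one_fin_three]
  ext i j
  fin_cases i <;> fin_cases j <;> simp [Matrix.vecHead, Matrix.vecTail]
  all_goals linear_combination 2 * sq2_sq

lemma Q23o : Q23ᵀ * Q23 = 1 := by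
  rw [Q23T, Q23, Matrix.mul_fin_three, Matrix.one_fin_three]
  ext i j
  fin_cases i <;> fin_cases j <;> simp [Matrix.vecHead, Matrix.vecTail]
  all_goals linear_combination 2 * sq2_sq

lemma Q12d : Q12.det = 1 := by
  simp [Q12, Matrix.det_fin_three, Matrix.vecHead, Matrix.vecTail]; nlinarith [sq2_sq]

lemma Q13d : Q13.det = 1 := by
  simp [Q13, Matrix.det_fin_three, Matrix.vecHead, Matrix.vecTail]; nlinarith [sq2_sq]

lemma Q23d : Q23.det = 1 := by
  simp [Q23, Matrix.det_fin_three, Matrix.vecHead, Matrix.vecTail]; nlinarith [sq2_sq]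

lemma Q12act (x : ℝ) : Q12 * !![x,0,0;0,-x,0;0,0,0] * Q12ᵀ = x • !![(0:ℝ),1,0;1,0,0;0,0,0] := by
  rw [Q12T, Q12, Matrix.mul_fin_three, Matrix.mul_fin_three]
  ext i j
  fin_cases i <;> fin_cases j <;> simp [Matrix.smul_apply, Matrix.vecHead, Matrix.vecTail]
  all_goals linear_combination (2*x) * sq2_sq

lemma Q13act (x : ℝ) : Q13 * !![x,0,0;0,0,0;0,0,-x] * Q13ᵀ = x • !![(0:ℝ),0,1;0,0,0;1,0,0] := by
  rw [Q13T, Q13, Matrix.mul_fin_three, Matrix.mul_fin_three]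
  ext i j
  fin_cases i <;> fin_cases j <;> simp [Matrix.smul_apply, Matrix.vecHead, Matrix.vecTail]
  all_goals linear_combination (2*x) * sq2_sq

lemma Q23act (x : ℝ) : Q23 * !![(0:ℝ),0,0;0,x,0;0,0,-x] * Q23ᵀ = x • !![(0:ℝ),0,0;0,0,1;0,1,0] := by
  rw [Q23T, Q23, Matrix.mul_fin_three, Matrix.mul_fin_three]
  ext i j
  fin_cases i <;> fin_cases j <;> simp [Matrix.smul_apply, Matrix.vecHead, Matrix.vecTail]
  all_goals linear_combination (2*x) * sq2_sq

lemma Q12conj : Q12 * !![(1:ℝ),0,0;0,-1,0;0,0,0] * Q12ᵀ = !![(0:ℝ),1,0;1,0,0;0,0,0] := by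
  have := Q12act 1
  norm_num at this
  convert this using 2 <;> norm_num

lemma Q13conj : Q13 * !![(1:ℝ),0,0;0,0,0;0,0,-1] * Q13ᵀ = !![(0:ℝ),0,1;0,0,0;1,0,0] := by
  have := Q13act 1
  norm_num at this
  convert this using 2 <;> norm_num

lemma Q23conj : Q23 * !![(0:ℝ),0,0;0,1,0;0,0,-1] * Q23ᵀ = !![(0:ℝ),0,0;0,0,1;0,1,0] := by
  have := Q23act 1
  norm_num at this
  convert this using 2 <;> norm_num

end IsoAux

set_option maxHeartbeats 1000000 in
theorem isotropic_elasticity_bulk_shear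
    (C : Sym3 →ₗ[ℝ] Sym3)
    (hC : ∀ Q : Matrix (Fin 3) (Fin 3) ℝ, Qᵀ * Q = 1 → Q.det = 1 →
      ∀ (E : Sym3) (hE : Q * (E : Matrix (Fin 3) (Fin 3) ℝ) * Qᵀ ∈ Sym3),
        ((C ⟨Q * (E : Matrix (Fin 3) (Fin 3) ℝ) * Qᵀ, hE⟩ : Sym3) : Matrix (Fin 3) (Fin 3) ℝ)
          = Q * ((C E : Sym3) : Matrix (Fin 3) (Fin 3) ℝ) * Qᵀ) :
    ∃ a b : ℝ, ∀ E : Sym3,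
      ((C E : Sym3) : Matrix (Fin 3) (Fin 3) ℝ)
        = a • (E : Matrix (Fin 3) (Fin 3) ℝ)
          + b • (Matrix.trace (E : Matrix (Fin 3) (Fin 3) ℝ))
              • (1 : Matrix (Fin 3) (Fin 3) ℝ) := by
  -- a general consequence of equivariance
  have key : ∀ (Q : IsoAux.Mat), Qᵀ * Q = 1 → Q.det = 1 → ∀ (E F : Sym3),
      Q * (E : IsoAux.Mat) * Qᵀ = (F : IsoAux.Mat) →
      ((C F : Sym3) : IsoAux.Mat) = Q * ((C E : Sym3) : IsoAux.Mat) * Qᵀ := by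
    intro Q h1 h2 E F hQE
    have h := hC Q h1 h2 E (IsoAux.conj_mem Q E)
    have heq : (⟨Q * (E : IsoAux.Mat) * Qᵀ, IsoAux.conj_mem Q E⟩ : Sym3) = F :=
      Subtype.ext hQE
    rwa [heq] at h
  -- basis elements of Sym3
  set d1 : Sym3 := ⟨!![1,0,0;0,0,0;0,0,0], by
    show _ᵀ = _; ext i j; fin_cases i <;> fin_cases j <;> rfl⟩ with hd1
  set d2 : Sym3 := ⟨!![0,0,0;0,1,0;0,0,0], by
    show _ᵀ = _; ext i j; fin_cases i <;> fin_cases j <;> rfl⟩ with hd2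
  set d3 : Sym3 := ⟨!![0,0,0;0,0,0;0,0,1], by
    show _ᵀ = _; ext i j; fin_cases i <;> fin_cases j <;> rfl⟩ with hd3
  set f12 : Sym3 := ⟨!![0,1,0;1,0,0;0,0,0], by
    show _ᵀ = _; ext i j; fin_cases i <;> fin_cases j <;> rfl⟩ with hf12
  set f13 : Sym3 := ⟨!![0,0,1;0,0,0;1,0,0], by
    show _ᵀ = _; ext i j; fin_cases i <;> fin_cases j <;> rfl⟩ with hf13
  set f23 : Sym3 := ⟨!![0,0,0;0,0,1;0,1,0], by
    show _ᵀ = _; ext i j; fin_cases i <;> fin_cases j <;> rfl⟩ with hf23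
  have hd1c : (d1 : IsoAux.Mat) = !![1,0,0;0,0,0;0,0,0] := rfl
  have hd2c : (d2 : IsoAux.Mat) = !![0,0,0;0,1,0;0,0,0] := rfl
  have hd3c : (d3 : IsoAux.Mat) = !![0,0,0;0,0,0;0,0,1] := rfl
  have hf12c : (f12 : IsoAux.Mat) = !![0,1,0;1,0,0;0,0,0] := rfl
  have hf13c : (f13 : IsoAux.Mat) = !![0,0,1;0,0,0;1,0,0] := rfl
  have hf23c : (f23 : IsoAux.Mat) = !![0,0,0;0,0,1;0,1,0] := rfl
  set m1 : IsoAux.Mat := ((C d1 : Sym3) : IsoAux.Mat) with hm1def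
  set m2 : IsoAux.Mat := ((C d2 : Sym3) : IsoAux.Mat) with hm2def
  set m3 : IsoAux.Mat := ((C d3 : Sym3) : IsoAux.Mat) with hm3def
  have m1sym : m1ᵀ = m1 := (C d1).2
  -- transposes of the orthogonal matrices we use
  have hTS1 : (!![(1:ℝ),0,0;0,-1,0;0,0,-1])ᵀ = !![(1:ℝ),0,0;0,-1,0;0,0,-1] := by
    ext i j; fin_cases i <;> fin_cases j <;> rfl
  have hTS2 : (!![(-1:ℝ),0,0;0,1,0;0,0,-1])ᵀ = !![(-1:ℝ),0,0;0,1,0;0,0,-1] := by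
    ext i j; fin_cases i <;> fin_cases j <;> rfl
  have hTR : (!![(1:ℝ),0,0;0,0,-1;0,1,0])ᵀ = !![(1:ℝ),0,0;0,0,1;0,-1,0] := by
    ext i j; fin_cases i <;> fin_cases j <;> rfl
  have hTP : (!![(0:ℝ),0,1;1,0,0;0,1,0])ᵀ = !![(0:ℝ),1,0;0,0,1;1,0,0] := by
    ext i j; fin_cases i <;> fin_cases j <;> rfl
  -- sign matrix S1 = diag(1,-1,-1)
  have hS1 : m1 = !![(1:ℝ),0,0;0,-1,0;0,0,-1] * m1 * !![(1:ℝ),0,0;0,-1,0;0,0,-1]ᵀ := by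
    refine key _ ?_ ?_ d1 d1 ?_
    · rw [hTS1, Matrix.mul_fin_three, Matrix.one_fin_three]; norm_num
    · rw [Matrix.det_fin_three]; simp
    · rw [hTS1, hd1c, Matrix.mul_fin_three, Matrix.mul_fin_three]; norm_num
  have hS2 : m1 = !![(-1:ℝ),0,0;0,1,0;0,0,-1] * m1 * !![(-1:ℝ),0,0;0,1,0;0,0,-1]ᵀ := by
    refine key _ ?_ ?_ d1 d1 ?_
    · rw [hTS2, Matrix.mul_fin_three, Matrix.one_fin_three]; norm_num
    · rw [Matrix.det_fin_three]; simp
    · rw [hTS2, hd1c, Matrix.mul_fin_three, Matrix.mul_fin_three]; norm_num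
  -- rotation by 90° about x-axis fixes d1
  have hR : m1 = !![(1:ℝ),0,0;0,0,-1;0,1,0] * m1 * !![(1:ℝ),0,0;0,0,-1;0,1,0]ᵀ := by
    refine key _ ?_ ?_ d1 d1 ?_
    · rw [hTR, Matrix.mul_fin_three, Matrix.one_fin_three]; norm_num
    · rw [Matrix.det_fin_three]; simp
    · rw [hTR, hd1c, Matrix.mul_fin_three, Matrix.mul_fin_three]; norm_num
  rw [hTS1, Matrix.eta_fin_three m1, Matrix.mul_fin_three, Matrix.mul_fin_three] at hS1
  rw [hTS2, Matrix.eta_fin_three m1, Matrix.mul_fin_three, Matrix.mul_fin_three] at hS2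
  rw [hTR, Matrix.eta_fin_three m1, Matrix.mul_fin_three, Matrix.mul_fin_three] at hR
  set α : ℝ := m1 0 0 with hα
  set β : ℝ := m1 1 1 with hβ
  -- m1 is diagonal with entries α, β, β
  have h01 : m1 0 1 = 0 := by
    have := congrFun (congrFun hS1 0) 1; simp at this; linarith
  have h02 : m1 0 2 = 0 := by
    have := congrFun (congrFun hS1 0) 2; simp at this; linarith
  have h12 : m1 1 2 = 0 := by
    have := congrFun (congrFun hS2 1) 2; simp at this; linarith
  have h10 : m1 1 0 = 0 := by
    have := congrFun (congrFun m1sym 0) 1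
    simp only [Matrix.transpose_apply] at this; rw [this]; exact h01
  have h20 : m1 2 0 = 0 := by
    have := congrFun (congrFun m1sym 0) 2
    simp only [Matrix.transpose_apply] at this; rw [this]; exact h02
  have h21 : m1 2 1 = 0 := by
    have := congrFun (congrFun m1sym 1) 2
    simp only [Matrix.transpose_apply] at this; rw [this]; exact h12
  have h22 : m1 2 2 = β := by
    have := congrFun (congrFun hR 1) 1; simp at this
    linarith
  have hm1 : m1 = !![α,0,0;0,β,0;0,0,β] := by
    ext i j; fin_cases i <;> fin_cases j <;>
      simp [h01, h02, h12, h10, h20, h21, h22, ← hα, ← hβ, Matrix.vecHead, Matrix.vecTail]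
  -- cyclic permutation P : e1 ↦ e2 ↦ e3 ↦ e1
  have hPo : (!![(0:ℝ),0,1;1,0,0;0,1,0])ᵀ * !![(0:ℝ),0,1;1,0,0;0,1,0] = 1 := by
    rw [hTP, Matrix.mul_fin_three, Matrix.one_fin_three]; norm_num
  have hPd : Matrix.det !![(0:ℝ),0,1;1,0,0;0,1,0] = 1 := by
    rw [Matrix.det_fin_three]; simp
  have hm2 : m2 = !![β,0,0;0,α,0;0,0,β] := by
    have h := key _ hPo hPd d1 d2 (by
      rw [hTP, hd1c, hd2c, Matrix.mul_fin_three, Matrix.mul_fin_three]; norm_num)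
    rw [hm2def, h, ← hm1def, hm1, hTP, Matrix.mul_fin_three, Matrix.mul_fin_three]
    ext i j; fin_cases i <;> fin_cases j <;> simp [Matrix.vecHead, Matrix.vecTail] <;> norm_num
  have hm3 : m3 = !![β,0,0;0,β,0;0,0,α] := by
    have h := key _ hPo hPd d2 d3 (by
      rw [hTP, hd2c, hd3c, Matrix.mul_fin_three, Matrix.mul_fin_three]; norm_num)
    rw [hm3def, h, ← hm2def, hm2, hTP, Matrix.mul_fin_three, Matrix.mul_fin_three]
    ext i j; fin_cases i <;> fin_cases j <;> simp [Matrix.vecHead, Matrix.vecTail] <;> norm_num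
  have key12 : ((C f12 : Sym3) : IsoAux.Mat) = (α - β) • (f12 : IsoAux.Mat) := by
    have hsubc : ((d1 - d2 : Sym3) : IsoAux.Mat) = !![(1:ℝ),0,0;0,-1,0;0,0,0] := by
      rw [AddSubgroupClass.coe_sub]
      ext i j; fin_cases i <;> fin_cases j <;> simp [hd1c, hd2c, hd3c, Matrix.vecHead, Matrix.vecTail]
    have harg : IsoAux.Q12 * ((d1 - d2 : Sym3) : IsoAux.Mat) * IsoAux.Q12ᵀ = (f12 : IsoAux.Mat) := by
      rw [hsubc, hf12c, IsoAux.Q12conj]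
    have h := key _ IsoAux.Q12o IsoAux.Q12d (d1 - d2) f12 harg
    have hsub : ((C (d1 - d2) : Sym3) : IsoAux.Mat) = !![α-β,0,0;0,-(α-β),0;0,0,0] := by
      rw [map_sub, AddSubgroupClass.coe_sub, ← hm1def, ← hm2def, hm1, hm2]
      ext i j; fin_cases i <;> fin_cases j <;> simp [Matrix.vecHead, Matrix.vecTail] <;> ring
    rw [h, hsub, hf12c, IsoAux.Q12act]
  have key13 : ((C f13 : Sym3) : IsoAux.Mat) = (α - β) • (f13 : IsoAux.Mat) := by
    have hsubc : ((d1 - d3 : Sym3) : IsoAux.Mat) = !![(1:ℝ),0,0;0,0,0;0,0,-1] := by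
      rw [AddSubgroupClass.coe_sub]
      ext i j; fin_cases i <;> fin_cases j <;> simp [hd1c, hd2c, hd3c, Matrix.vecHead, Matrix.vecTail]
    have harg : IsoAux.Q13 * ((d1 - d3 : Sym3) : IsoAux.Mat) * IsoAux.Q13ᵀ = (f13 : IsoAux.Mat) := by
      rw [hsubc, hf13c, IsoAux.Q13conj]
    have h := key _ IsoAux.Q13o IsoAux.Q13d (d1 - d3) f13 harg
    have hsub : ((C (d1 - d3) : Sym3) : IsoAux.Mat) = !![α-β,0,0;0,0,0;0,0,-(α-β)] := by
      rw [map_sub, AddSubgroupClass.coe_sub, ← hm1def, ← hm3def, hm1, hm3]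
      ext i j; fin_cases i <;> fin_cases j <;> simp [Matrix.vecHead, Matrix.vecTail] <;> ring
    rw [h, hsub, hf13c, IsoAux.Q13act]
  have key23 : ((C f23 : Sym3) : IsoAux.Mat) = (α - β) • (f23 : IsoAux.Mat) := by
    have hsubc : ((d2 - d3 : Sym3) : IsoAux.Mat) = !![(0:ℝ),0,0;0,1,0;0,0,-1] := by
      rw [AddSubgroupClass.coe_sub]
      ext i j; fin_cases i <;> fin_cases j <;> simp [hd1c, hd2c, hd3c, Matrix.vecHead, Matrix.vecTail]
    have harg : IsoAux.Q23 * ((d2 - d3 : Sym3) : IsoAux.Mat) * IsoAux.Q23ᵀ = (f23 : IsoAux.Mat) := by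
      rw [hsubc, hf23c, IsoAux.Q23conj]
    have h := key _ IsoAux.Q23o IsoAux.Q23d (d2 - d3) f23 harg
    have hsub : ((C (d2 - d3) : Sym3) : IsoAux.Mat) = !![(0:ℝ),0,0;0,α-β,0;0,0,-(α-β)] := by
      rw [map_sub, AddSubgroupClass.coe_sub, ← hm2def, ← hm3def, hm2, hm3]
      ext i j; fin_cases i <;> fin_cases j <;> simp [Matrix.vecHead, Matrix.vecTail] <;> ring
    rw [h, hsub, hf23c, IsoAux.Q23act]
  -- conclusion
  refine ⟨α - β, β, ?_⟩
  rintro ⟨M, hM⟩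
  have hMsym : Mᵀ = M := hM
  have e10 : M 1 0 = M 0 1 := (congrFun (congrFun hMsym 1) 0).symm
  have e20 : M 2 0 = M 0 2 := (congrFun (congrFun hMsym 2) 0).symm
  have e21 : M 2 1 = M 1 2 := (congrFun (congrFun hMsym 2) 1).symm
  have hdec : (⟨M, hM⟩ : Sym3) = M 0 0 • d1 + M 1 1 • d2 + M 2 2 • d3
      + M 0 1 • f12 + M 0 2 • f13 + M 1 2 • f23 := by
    apply Subtype.ext
    show M = _
    simp only [Submodule.coe_add, SetLike.val_smul, hd1c, hd2c, hd3c, hf12c, hf13c, hf23c]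
    ext i j; fin_cases i <;> fin_cases j <;>
      simp [Matrix.add_apply, Matrix.smul_apply, e10, e20, e21, Matrix.vecHead, Matrix.vecTail]
  rw [hdec]
  simp only [map_add, _root_.map_smul, Submodule.coe_add, SetLike.val_smul]
  rw [← hm1def, ← hm2def, ← hm3def, key12, key13, key23, hm1, hm2, hm3,
    hf12c, hf13c, hf23c]
  have htr : Matrix.trace (M 0 0 • !![(1:ℝ),0,0;0,0,0;0,0,0] + M 1 1 • !![0,0,0;0,1,0;0,0,0]
      + M 2 2 • !![0,0,0;0,0,0;0,0,1] + M 0 1 • !![0,1,0;1,0,0;0,0,0]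
      + M 0 2 • !![0,0,1;0,0,0;1,0,0] + M 1 2 • !![0,0,0;0,0,1;0,1,0])
      = M 0 0 + M 1 1 + M 2 2 := by
    simp [Matrix.trace_fin_three, Matrix.add_apply, Matrix.smul_apply, Matrix.vecHead, Matrix.vecTail]
  rw [htr]
  ext i j; fin_cases i <;> fin_cases j <;>
    simp [hd1c, hd2c, hd3c, Matrix.add_apply, Matrix.smul_apply, Matrix.one_apply, Matrix.vecHead, Matrix.vecTail] <;> ring
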